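/- If F is a homeomorphism of the plane ℝ² commuting with the translations S:(x,y)↦(x+1,y) and T:(x,y)↦(x,y+1), then the classical Misiurewicz–Ziemian rotation set of F (the set of limits of (F^{n_k}(z_k)-z_k)/n_k with n_k→∞) coincides with the rotation set ρ_{S,T}(F) defined via compact sets: the set of vectors w such that there exist a compact K⊂ℝ² and a sequence (m_k,n_k,p_k)∈ℤ³ tending to infinity with S^{-m_k}T^{-n_k}F^{p_k}(K)∩K ≠ ∅ and (m_k/p_k, n_k/p_k) → w. -/

import Mathlib

open Filter Topology Pointwise

noncomputable section

/-- Natural iterates of a homeomorphism. -/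
def hnpow {X : Type*} [TopologicalSpace X] (F : X ≃ₜ X) : ℕ → X ≃ₜ X
  | 0 => Homeomorph.refl X
  | n + 1 => (hnpow F n).trans F

/-- Integer iterates of a homeomorphism. -/
def hzpow {X : Type*} [TopologicalSpace X] (F : X ≃ₜ X) : ℤ → X ≃ₜ X
  | Int.ofNat n => hnpow F n
  | Int.negSucc n => hnpow F.symm (n + 1)

/-- `act U V G m n p = U^{-m} ∘ V^{-n} ∘ G^{p}`. -/
def act {X : Type*} [TopologicalSpace X] (U V G : X ≃ₜ X) (m n p : ℤ) : X ≃ₜ X :=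
  ((hzpow G p).trans (hzpow V (-n))).trans (hzpow U (-m))

/-- A sequence in `ℤ³` tends to infinity. -/
def tendsInfty (s : ℕ → ℤ × ℤ × ℤ) : Prop :=
  Tendsto (fun k => |(s k).1| + |(s k).2.1| + |(s k).2.2|) atTop atTop

/-- The rotation set of `G` with respect to `U` and `V`, defined via compact sets:
`w` belongs to it iff there are a compact `K` and `(m_k, n_k, p_k) ∈ ℤ³` tending to infinity
with `U^{-m_k} V^{-n_k} G^{p_k}(K) ∩ K ≠ ∅` and `(m_k/p_k, n_k/p_k) → w`. -/
def rotSet {X : Type*} [TopologicalSpace X] (G U V : X ≃ₜ X) : Set (ℝ × ℝ) :=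
  {w | ∃ K : Set X, IsCompact K ∧ ∃ s : ℕ → ℤ × ℤ × ℤ,
    (∀ k, ((act U V G (s k).1 (s k).2.1 (s k).2.2) '' K ∩ K).Nonempty) ∧
    tendsInfty s ∧
    Tendsto (fun k => ((((s k).1 : ℝ) / ((s k).2.2 : ℝ), ((s k).2.1 : ℝ) / ((s k).2.2 : ℝ)) : ℝ × ℝ))
      atTop (nhds w)}

/-- Two homeomorphisms commute. -/
def commuting {X : Type*} [TopologicalSpace X] (F G : X ≃ₜ X) : Prop := ∀ x, F (G x) = G (F x)

/-- The unit horizontal translation `S : (x,y) ↦ (x+1,y)`. -/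
def S2 : (ℝ × ℝ) ≃ₜ (ℝ × ℝ) := Homeomorph.addRight ((1 : ℝ), (0 : ℝ))

/-- The unit vertical translation `T : (x,y) ↦ (x,y+1)`. -/
def T2 : (ℝ × ℝ) ≃ₜ (ℝ × ℝ) := Homeomorph.addRight ((0 : ℝ), (1 : ℝ))

/-- The displacement set `D(H) = {H(z) - z : z ∈ ℝ²}`. -/
def disp (H : (ℝ × ℝ) ≃ₜ (ℝ × ℝ)) : Set (ℝ × ℝ) := Set.range fun z => H z - z

/-- `mk2 F a b c = S^a ∘ T^b ∘ F^{-c}`. -/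
def mk2 (F : (ℝ × ℝ) ≃ₜ (ℝ × ℝ)) (a b c : ℤ) : (ℝ × ℝ) ≃ₜ (ℝ × ℝ) :=
  ((hzpow F (-c)).trans (hzpow T2 b)).trans (hzpow S2 a)

/-- The projective action of an integer 3×3 matrix in the affine chart. -/
def lhatZ (L : Matrix (Fin 3) (Fin 3) ℤ) (p : ℝ × ℝ) : ℝ × ℝ :=
  (((L 0 0 : ℝ) * p.1 + (L 0 1 : ℝ) * p.2 + (L 0 2 : ℝ)) /
      ((L 2 0 : ℝ) * p.1 + (L 2 1 : ℝ) * p.2 + (L 2 2 : ℝ)),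
   ((L 1 0 : ℝ) * p.1 + (L 1 1 : ℝ) * p.2 + (L 1 2 : ℝ)) /
      ((L 2 0 : ℝ) * p.1 + (L 2 1 : ℝ) * p.2 + (L 2 2 : ℝ)))

/-- The classical Misiurewicz–Ziemian rotation set of `F`. -/
def classicalRot (F : (ℝ × ℝ) ≃ₜ (ℝ × ℝ)) : Set (ℝ × ℝ) :=
  {w | ∃ z : ℕ → ℝ × ℝ, ∃ n : ℕ → ℕ, Tendsto n atTop atTop ∧
    Tendsto (fun k => ((n k : ℝ))⁻¹ • ((hnpow F (n k)) (z k) - z k)) atTop (nhds w)}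

namespace Stmt0Aux

variable {X : Type*} [TopologicalSpace X]

lemma hnpow_succ (F : X ≃ₜ X) (n : ℕ) (x : X) : hnpow F (n+1) x = F (hnpow F n x) := rfl

lemma hnpow_symm_comm (F : X ≃ₜ X) (n : ℕ) (x : X) :
    hnpow F.symm n (F x) = F (hnpow F.symm n x) := by
  induction n with
  | zero => rfl
  | succ n ih => simp [hnpow_succ, ih]

lemma hnpow_symm_cancel (F : X ≃ₜ X) (n : ℕ) (x : X) :
    hnpow F.symm n (hnpow F n x) = x := by
  induction n with
  | zero => rfl
  | succ n ih => simp [hnpow_succ, hnpow_symm_comm, ih]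

lemma hnpow_cancel (F : X ≃ₜ X) (n : ℕ) (x : X) :
    hnpow F n (hnpow F.symm n x) = x := by
  have := hnpow_symm_cancel F.symm n x
  simpa using this

lemma hzpow_neg_cancel (F : X ≃ₜ X) (p : ℤ) (x : X) : hzpow F (-p) (hzpow F p x) = x := by
  cases p with
  | ofNat n =>
    cases n with
    | zero => rfl
    | succ n =>
      show hzpow F (Int.negSucc n) (hnpow F (n+1) x) = x
      exact hnpow_symm_cancel F (n+1) x
  | negSucc n =>
    show hzpow F (Int.ofNat (n+1)) (hnpow F.symm (n+1) x) = x
    exact hnpow_cancel F (n+1) x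

lemma hzpow_natCast (F : X ≃ₜ X) (n : ℕ) : hzpow F (n:ℤ) = hnpow F n := rfl

/-- `H` translates by `v`. -/
def tp (H : (ℝ×ℝ) ≃ₜ (ℝ×ℝ)) (v : ℝ×ℝ) : Prop := ∀ x, H (x + v) = H x + v

lemma tp.zero (H : (ℝ×ℝ) ≃ₜ (ℝ×ℝ)) : tp H 0 := fun x => by simp

lemma tp.add {H : (ℝ×ℝ) ≃ₜ (ℝ×ℝ)} {v w} (h1 : tp H v) (h2 : tp H w) : tp H (v + w) := fun x => by
  rw [← add_assoc, h2, h1, add_assoc]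

lemma tp.neg {H : (ℝ×ℝ) ≃ₜ (ℝ×ℝ)} {v} (h : tp H v) : tp H (-v) := by
  intro x
  have h1 := h (x + -v)
  rw [add_assoc, neg_add_cancel, add_zero] at h1
  rw [h1, add_assoc, add_neg_cancel, add_zero]

lemma tp.zsmul {H : (ℝ×ℝ) ≃ₜ (ℝ×ℝ)} {v} (h : tp H v) (a : ℤ) : tp H (a • v) := by
  induction a using Int.induction_on with
  | zero => simpa using tp.zero H
  | succ n ih => rw [add_smul, one_smul]; exact ih.add h
  | pred n ih => rw [sub_smul, one_smul, sub_eq_add_neg]; exact ih.add h.neg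

lemma tp.symm {H : (ℝ×ℝ) ≃ₜ (ℝ×ℝ)} {v} (h : tp H v) : tp H.symm v := by
  intro x
  have h1 : H (H.symm x + v) = x + v := by rw [h, Homeomorph.apply_symm_apply]
  rw [← h1, Homeomorph.symm_apply_apply]

lemma tp.trans {H G : (ℝ×ℝ) ≃ₜ (ℝ×ℝ)} {v} (h1 : tp H v) (h2 : tp G v) : tp (H.trans G) v := by
  intro x
  simp [Homeomorph.trans_apply, h1 x, h2 (H x)]

lemma tp.hnpow {H : (ℝ×ℝ) ≃ₜ (ℝ×ℝ)} {v} (h : tp H v) (n : ℕ) : tp (hnpow H n) v := by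
  induction n with
  | zero => intro x; rfl
  | succ n ih => exact ih.trans h

lemma tp.hzpow {H : (ℝ×ℝ) ≃ₜ (ℝ×ℝ)} {v} (h : tp H v) (p : ℤ) : tp (hzpow H p) v := by
  cases p with
  | ofNat n => exact h.hnpow n
  | negSucc n => exact h.symm.hnpow (n+1)

variable {H : (ℝ×ℝ) ≃ₜ (ℝ×ℝ)} {v : ℝ×ℝ}

lemma hnpow_translate (h : ∀ x, H x = x + v) (n : ℕ) (x : ℝ×ℝ) :
    hnpow H n x = x + n • v := by
  induction n with
  | zero => simp; rfl
  | succ n ih =>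
    show H (hnpow H n x) = _
    rw [h, ih, succ_nsmul, add_assoc]

lemma symm_translate (h : ∀ x, H x = x + v) (x : ℝ×ℝ) : H.symm x = x + -v := by
  have h1 : H (x + -v) = x := by rw [h, add_assoc, neg_add_cancel, add_zero]
  conv_lhs => rw [← h1]
  rw [Homeomorph.symm_apply_apply]

lemma hzpow_translate (h : ∀ x, H x = x + v) (a : ℤ) (x : ℝ×ℝ) :
    hzpow H a x = x + a • v := by
  cases a with
  | ofNat n =>
    show hnpow H n x = _
    rw [hnpow_translate h, Int.ofNat_eq_coe, natCast_zsmul]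
  | negSucc n =>
    show hnpow H.symm (n+1) x = _
    rw [hnpow_translate (symm_translate h), negSucc_zsmul, smul_neg]

lemma hzpow_S2 (a : ℤ) (x : ℝ×ℝ) : hzpow S2 a x = x + ((a:ℝ), 0) := by
  rw [hzpow_translate (fun x => rfl) a]
  congr 1
  ext <;> simp

lemma hzpow_T2 (a : ℤ) (x : ℝ×ℝ) : hzpow T2 a x = x + (0, (a:ℝ)) := by
  rw [hzpow_translate (fun x => rfl) a]
  congr 1
  ext <;> simp

lemma act_apply (F : (ℝ×ℝ) ≃ₜ (ℝ×ℝ)) (m n p : ℤ) (x : ℝ×ℝ) :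
    act S2 T2 F m n p x = hzpow F p x - ((m:ℝ), (n:ℝ)) := by
  show hzpow S2 (-m) (hzpow T2 (-n) (hzpow F p x)) = _
  rw [hzpow_T2, hzpow_S2]
  apply Prod.ext <;> · push_cast; simp [Prod.fst_add, Prod.snd_add]; ring

lemma tpF {F : (ℝ×ℝ) ≃ₜ (ℝ×ℝ)} (hS : commuting F S2) (hT : commuting F T2) (a b : ℤ) :
    tp F ((a:ℝ), (b:ℝ)) := by
  have h1 : tp F ((1:ℝ),(0:ℝ)) := fun x => hS x
  have h2 : tp F ((0:ℝ),(1:ℝ)) := fun x => hT x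
  have h3 := (h1.zsmul a).add (h2.zsmul b)
  have he : (a • ((1:ℝ),(0:ℝ)) + b • ((0:ℝ),(1:ℝ))) = ((a:ℝ),(b:ℝ)) := by
    ext <;> simp
  rwa [he] at h3


lemma forward {F : (ℝ×ℝ) ≃ₜ (ℝ×ℝ)} (hS : commuting F S2) (hT : commuting F T2) :
    classicalRot F ⊆ rotSet F S2 T2 := by
  rintro w ⟨z, n, htend, hlim⟩
  refine ⟨Set.Icc ((0:ℝ),(0:ℝ)) ((1:ℝ),(1:ℝ)), isCompact_Icc, ?_⟩
  set x : ℕ → ℝ×ℝ := fun k => (Int.fract (z k).1, Int.fract (z k).2) with hxdef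
  set u : ℕ → ℝ×ℝ := fun k => hnpow F (n k) (x k) with hudef
  set v : ℕ → ℝ×ℝ := fun k => ((⌊(z k).1⌋:ℝ), (⌊(z k).2⌋:ℝ)) with hvdef
  have hz : ∀ k, z k = x k + v k := by
    intro k
    have hxk : x k = (Int.fract (z k).1, Int.fract (z k).2) := rfl
    have hvk : v k = ((⌊(z k).1⌋:ℝ), (⌊(z k).2⌋:ℝ)) := rfl
    rw [hxk, hvk, Prod.mk_add_mk]
    apply Prod.ext
    · show (z k).1 = Int.fract (z k).1 + (⌊(z k).1⌋:ℝ)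
      rw [Int.fract_add_floor]
    · show (z k).2 = Int.fract (z k).2 + (⌊(z k).2⌋:ℝ)
      rw [Int.fract_add_floor]
  have hdiff : ∀ k, hnpow F (n k) (z k) - z k = u k - x k := by
    intro k
    have h1 : hnpow F (n k) (z k) = u k + v k := by
      conv_lhs => rw [hz k]
      exact ((tpF hS hT _ _).hnpow (n k)) (x k)
    rw [h1]
    conv_lhs => rw [hz k]
    exact add_sub_add_right_eq_sub _ _ _
  have hx1 : ∀ k, (0:ℝ) ≤ (x k).1 := fun k => Int.fract_nonneg (z k).1
  have hx1' : ∀ k, (x k).1 < 1 := fun k => Int.fract_lt_one (z k).1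
  have hx2 : ∀ k, (0:ℝ) ≤ (x k).2 := fun k => Int.fract_nonneg (z k).2
  have hx2' : ∀ k, (x k).2 < 1 := fun k => Int.fract_lt_one (z k).2
  have xmem : ∀ k, x k ∈ Set.Icc ((0:ℝ),(0:ℝ)) ((1:ℝ),(1:ℝ)) := by
    intro k
    simp only [Set.mem_Icc, Prod.le_def]
    exact ⟨⟨hx1 k, hx2 k⟩, ⟨(hx1' k).le, (hx2' k).le⟩⟩
  refine ⟨fun k => (⌊(u k).1⌋, ⌊(u k).2⌋, (n k : ℤ)), ?_, ?_, ?_⟩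
  · intro k
    refine ⟨act S2 T2 F ⌊(u k).1⌋ ⌊(u k).2⌋ (n k : ℤ) (x k), ⟨x k, xmem k, rfl⟩, ?_⟩
    rw [act_apply, hzpow_natCast]
    simp only [Set.mem_Icc, Prod.le_def, Prod.fst_sub, Prod.snd_sub]
    refine ⟨⟨?_, ?_⟩, ?_, ?_⟩ <;>
      linarith [Int.floor_le (u k).1, Int.lt_floor_add_one (u k).1,
        Int.floor_le (u k).2, Int.lt_floor_add_one (u k).2]
  · refine tendsto_atTop_mono (fun k => ?_)
      ((tendsto_natCast_atTop_atTop (R := ℤ)).comp htend)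
    calc ((n k : ℤ)) ≤ |(n k : ℤ)| := le_abs_self _
      _ ≤ |⌊(u k).1⌋| + |⌊(u k).2⌋| + |(n k : ℤ)| := le_add_of_nonneg_left (by positivity)
  · simp only [Int.cast_natCast]
    have hzero : Tendsto (fun k =>
        (((⌊(u k).1⌋:ℝ) / (n k:ℝ), (⌊(u k).2⌋:ℝ) / (n k:ℝ)) : ℝ×ℝ)
          - (n k:ℝ)⁻¹ • (hnpow F (n k) (z k) - z k)) atTop (nhds 0) := by
      refine squeeze_zero_norm (fun k => ?_)
        (((tendsto_natCast_atTop_atTop (R := ℝ)).comp htend).const_div_atTop 2)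
      rw [Prod.norm_def, max_le_iff]
      have hb1 : |(⌊(u k).1⌋:ℝ) - (u k).1 + (x k).1| ≤ 2 :=
        abs_le.mpr ⟨by linarith [Int.floor_le (u k).1, Int.lt_floor_add_one (u k).1, hx1 k, hx1' k],
          by linarith [Int.floor_le (u k).1, Int.lt_floor_add_one (u k).1, hx1 k, hx1' k]⟩
      have hb2 : |(⌊(u k).2⌋:ℝ) - (u k).2 + (x k).2| ≤ 2 :=
        abs_le.mpr ⟨by linarith [Int.floor_le (u k).2, Int.lt_floor_add_one (u k).2, hx2 k, hx2' k],
          by linarith [Int.floor_le (u k).2, Int.lt_floor_add_one (u k).2, hx2 k, hx2' k]⟩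
      constructor
      · have he : ((((⌊(u k).1⌋:ℝ) / (n k:ℝ), (⌊(u k).2⌋:ℝ) / (n k:ℝ)) : ℝ×ℝ)
            - (n k:ℝ)⁻¹ • (hnpow F (n k) (z k) - z k)).1
            = ((⌊(u k).1⌋:ℝ) - (u k).1 + (x k).1) * (n k:ℝ)⁻¹ := by
          rw [hdiff k]
          show (⌊(u k).1⌋:ℝ) / (n k:ℝ) - (n k:ℝ)⁻¹ * ((u k).1 - (x k).1) = _
          rw [div_eq_mul_inv]; ring
        rw [Real.norm_eq_abs, he, abs_mul, abs_inv, Nat.abs_cast, div_eq_mul_inv]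
        exact mul_le_mul_of_nonneg_right hb1 (by positivity)
      · have he : ((((⌊(u k).1⌋:ℝ) / (n k:ℝ), (⌊(u k).2⌋:ℝ) / (n k:ℝ)) : ℝ×ℝ)
            - (n k:ℝ)⁻¹ • (hnpow F (n k) (z k) - z k)).2
            = ((⌊(u k).2⌋:ℝ) - (u k).2 + (x k).2) * (n k:ℝ)⁻¹ := by
          rw [hdiff k]
          show (⌊(u k).2⌋:ℝ) / (n k:ℝ) - (n k:ℝ)⁻¹ * ((u k).2 - (x k).2) = _
          rw [div_eq_mul_inv]; ring
        rw [Real.norm_eq_abs, he, abs_mul, abs_inv, Nat.abs_cast, div_eq_mul_inv]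
        exact mul_le_mul_of_nonneg_right hb2 (by positivity)
    have hfin := hlim.add hzero
    rw [add_zero] at hfin
    apply hfin.congr
    intro k
    abel


lemma backward {F : (ℝ×ℝ) ≃ₜ (ℝ×ℝ)} (hS : commuting F S2) (hT : commuting F T2) :
    rotSet F S2 T2 ⊆ classicalRot F := by
  rintro w ⟨K, hK, s, hne, hinf, hlim⟩
  set m : ℕ → ℤ := fun k => (s k).1 with hmdef
  set nn : ℕ → ℤ := fun k => (s k).2.1 with hnndef
  set p : ℕ → ℤ := fun k => (s k).2.2 with hpdef
  have hwit : ∀ k, ∃ x, x ∈ K ∧ hzpow F (p k) x - ((m k:ℝ), (nn k:ℝ)) ∈ K := by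
    intro k
    obtain ⟨yy, ⟨xx, hxK, rfl⟩, hyK⟩ := hne k
    rw [act_apply] at hyK
    exact ⟨xx, hxK, hyK⟩
  choose x hxK hyK using hwit
  set y : ℕ → ℝ×ℝ := fun k => hzpow F (p k) (x k) - ((m k:ℝ), (nn k:ℝ)) with hydef
  obtain ⟨R, hR⟩ : ∃ R : ℝ, ∀ z ∈ K, ‖z‖ ≤ R := isBounded_iff_forall_norm_le.1 hK.isBounded
  -- |p k| → ∞
  have hpinf : Tendsto (fun k => |p k|) atTop atTop := by
    rw [tendsto_atTop]
    intro B
    set B' : ℤ := max B 1 with hB'def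
    have hBB' : B ≤ B' := le_max_left _ _
    have hB'1 : 1 ≤ B' := le_max_right _ _
    have hCq : ∀ q : ℤ, ∃ C : ℝ, ∀ z ∈ K, ‖hzpow F q z‖ ≤ C := by
      intro q
      obtain ⟨C, hC⟩ := isBounded_iff_forall_norm_le.1 (hK.image (hzpow F q).continuous).isBounded
      exact ⟨C, fun z hz => hC _ ⟨z, hz, rfl⟩⟩
    choose C hC using hCq
    have hne' : (Finset.Icc (-B') B').Nonempty := ⟨0, by simp [Finset.mem_Icc]; omega⟩
    set Cm : ℝ := (Finset.Icc (-B') B').sup' hne' C with hCmdef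
    set E : ℤ := ⌈Cm + R⌉ with hEdef
    filter_upwards [hinf.eventually_ge_atTop (2*E + B' + 1)] with k hk
    by_contra hcon
    push_neg at hcon
    have habs := abs_nonneg (p k)
    have htri1 := neg_abs_le (p k)
    have htri2 := le_abs_self (p k)
    have hpB : p k ∈ Finset.Icc (-B') B' := by
      rw [Finset.mem_Icc]
      omega
    have h1 : ‖hzpow F (p k) (x k)‖ ≤ Cm :=
      le_trans (hC (p k) _ (hxK k)) (Finset.le_sup' C hpB)
    have h2 : ‖y k‖ ≤ R := hR _ (hyK k)
    have h3 : ‖((m k:ℝ), (nn k:ℝ))‖ ≤ Cm + R := by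
      have hsub : ((m k:ℝ), (nn k:ℝ)) = hzpow F (p k) (x k) - y k :=
        (sub_sub_cancel (hzpow F (p k) (x k)) ((m k:ℝ), (nn k:ℝ))).symm
      rw [hsub]
      exact (norm_sub_le _ _).trans (add_le_add h1 h2)
    have h4 : (|m k| : ℝ) ≤ Cm + R := by
      have h := (norm_fst_le ((m k:ℝ), (nn k:ℝ))).trans h3
      simp only [Real.norm_eq_abs] at h
      push_cast
      exact h
    have h5 : (|nn k| : ℝ) ≤ Cm + R := by
      have h := (norm_snd_le ((m k:ℝ), (nn k:ℝ))).trans h3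
      simp only [Real.norm_eq_abs] at h
      push_cast
      exact h
    have h6 : |m k| ≤ E := by
      have : (|m k| : ℝ) ≤ (E : ℝ) := h4.trans (Int.le_ceil _)
      exact_mod_cast this
    have h7 : |nn k| ≤ E := by
      have : (|nn k| : ℝ) ≤ (E : ℝ) := h5.trans (Int.le_ceil _)
      exact_mod_cast this
    have hk' : 2*E + B' + 1 ≤ |m k| + |nn k| + |p k| := hk
    omega
  -- construct classical data
  set N : ℕ → ℕ := fun k => (p k).natAbs with hNdef
  have hN : Tendsto N atTop atTop := by
    rw [tendsto_atTop]
    intro b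
    filter_upwards [hpinf.eventually_ge_atTop (b:ℤ)] with k hk
    rw [Int.abs_eq_natAbs] at hk
    show b ≤ (p k).natAbs
    exact_mod_cast hk
  set z : ℕ → ℝ×ℝ := fun k => if 0 ≤ p k then x k else y k with hzdef
  refine ⟨z, N, hN, ?_⟩
  set err : ℕ → ℝ×ℝ := fun k => (N k:ℝ)⁻¹ • (if 0 ≤ p k then y k - x k else x k - y k)
    with herrdef
  have herr : Tendsto err atTop (nhds 0) := by
    refine squeeze_zero_norm (fun k => ?_)
      (((tendsto_natCast_atTop_atTop (R := ℝ)).comp hN).const_div_atTop (R + R))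
    show ‖err k‖ ≤ (R + R) / ((N k:ℕ):ℝ)
    rw [herrdef]
    simp only []
    rw [norm_smul, Real.norm_eq_abs, abs_inv, Nat.abs_cast, div_eq_mul_inv, mul_comm]
    apply mul_le_mul_of_nonneg_right ?_ (by positivity)
    by_cases hc : 0 ≤ p k
    · rw [if_pos hc]
      exact (norm_sub_le _ _).trans (add_le_add (hR _ (hyK k)) (hR _ (hxK k)))
    · rw [if_neg hc]
      exact (norm_sub_le _ _).trans (add_le_add (hR _ (hxK k)) (hR _ (hyK k)))
  have key : ∀ k, p k ≠ 0 →
      ((((m k):ℝ) / ((p k):ℝ), (((nn k):ℝ)) / ((p k):ℝ)) : ℝ×ℝ) + err k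
        = (N k:ℝ)⁻¹ • (hnpow F (N k) (z k) - z k) := by
    intro k hk0
    by_cases hc : 0 ≤ p k
    · have hNp : ((N k : ℤ)) = p k := Int.natAbs_of_nonneg hc
      have hNpR : ((N k : ℕ):ℝ) = ((p k):ℝ) := by exact_mod_cast hNp
      have hiter : hnpow F (N k) (z k) = hzpow F (p k) (x k) := by
        rw [hzdef]
        simp only [if_pos hc]
        rw [← hzpow_natCast F (N k), hNp]
      have hsplit : hzpow F (p k) (x k) = y k + ((m k:ℝ), (nn k:ℝ)) :=
        (sub_add_cancel (hzpow F (p k) (x k)) (((m k):ℝ), ((nn k):ℝ))).symm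
      rw [hiter, hsplit, herrdef]
      simp only [if_pos hc]
      have hzx : z k = x k := by rw [hzdef]; simp only [if_pos hc]
      rw [hzx]
      have : y k + ((m k:ℝ), (nn k:ℝ)) - x k = ((m k:ℝ), (nn k:ℝ)) + (y k - x k) := by abel
      rw [this, smul_add]
      congr 1
      apply Prod.ext
      · show (m k:ℝ) / ((p k):ℝ) = (N k:ℝ)⁻¹ * (m k:ℝ)
        rw [← hNpR, div_eq_inv_mul]
      · show (nn k:ℝ) / ((p k):ℝ) = (N k:ℝ)⁻¹ * (nn k:ℝ)
        rw [← hNpR, div_eq_inv_mul]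
    · push_neg at hc
      have hNp : ((N k : ℤ)) = -(p k) := by
        show (((p k).natAbs : ℤ)) = -(p k)
        omega
      have hNpR : ((N k : ℕ):ℝ) = -((p k):ℝ) := by exact_mod_cast hNp
      have hzy : z k = y k := by rw [hzdef]; simp only [if_neg (not_le.mpr hc)]
      have hiter : hnpow F (N k) (y k) = x k - ((m k:ℝ), (nn k:ℝ)) := by
        have h0 : hnpow F (N k) (y k) = hzpow F (-(p k)) (y k) := by
          rw [← hzpow_natCast F (N k), hNp]
        have hneg : (((-(m k) : ℤ):ℝ), ((-(nn k) : ℤ):ℝ)) = -(((m k):ℝ), ((nn k):ℝ)) := by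
          apply Prod.ext <;> simp
        have hv : y k = hzpow F (p k) (x k) + (((-(m k) : ℤ):ℝ), ((-(nn k) : ℤ):ℝ)) := by
          rw [hneg, ← sub_eq_add_neg]
        rw [h0, hv, ((tpF hS hT (-(m k)) (-(nn k))).hzpow (-(p k))) (hzpow F (p k) (x k)),
          hzpow_neg_cancel, hneg, ← sub_eq_add_neg]
      rw [hzy, hiter, herrdef]
      simp only [if_neg (not_le.mpr hc)]
      have : x k - ((m k:ℝ), (nn k:ℝ)) - y k = -((m k:ℝ), (nn k:ℝ)) + (x k - y k) := by abel
      rw [this, smul_add]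
      congr 1
      rw [smul_neg]
      apply Prod.ext
      · show (m k:ℝ) / ((p k):ℝ) = -((N k:ℝ)⁻¹ * (m k:ℝ))
        rw [hNpR, inv_neg, neg_mul, neg_neg, div_eq_inv_mul]
      · show (nn k:ℝ) / ((p k):ℝ) = -((N k:ℝ)⁻¹ * (nn k:ℝ))
        rw [hNpR, inv_neg, neg_mul, neg_neg, div_eq_inv_mul]
  have hfin := hlim.add herr
  rw [add_zero] at hfin
  refine hfin.congr' ?_
  filter_upwards [hpinf.eventually_ge_atTop 1] with k hk
  exact key k (abs_pos.mp (lt_of_lt_of_le zero_lt_one hk))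


end Stmt0Aux

/-- the classical rotation set coincides with the one defined via compact sets. -/
theorem stmt0 (F : (ℝ × ℝ) ≃ₜ (ℝ × ℝ)) (hS : commuting F S2) (hT : commuting F T2) :
    classicalRot F = rotSet F S2 T2 :=
  Set.Subset.antisymm (Stmt0Aux.forward hS hT) (Stmt0Aux.backward hS hT)
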